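/- Consider the deterministic discrete-time system x_{k+1} = f(x_k, d_k) with continuous f : ℝⁿ × ℝ^m → ℝⁿ, f(0,0) = 0. Suppose there exists a continuous V : ℝⁿ → ℝ_{≥0} and functions κ₁, κ₂, κ₃ ∈ K_∞ and κ₄ ∈ K such that κ₁(‖x‖) ≤ V(x) ≤ κ₂(‖x‖) for all x ∈ ℝⁿ and V(f(x,d)) − V(x) ≤ −κ₃(‖x‖) + κ₄(‖d‖) for all x ∈ ℝⁿ, d ∈ ℝ^m. Then the system is input-to-state stable: there exist β ∈ KL and γ ∈ K such that for every initial state x₀ and every bounded disturbance sequence (d_k), the trajectory satisfies ‖x_k‖ ≤ β(‖x₀‖, k) + γ(sup_{j∈ℕ} ‖d_j‖) for all k ∈ ℕ. -/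

import Mathlib

open Filter Set

/-- A continuous function `γ : [0,∞) → [0,∞)` is of class `K` if it is strictly increasing
and `γ 0 = 0`. -/
def ClassK (γ : ℝ → ℝ) : Prop :=
  ContinuousOn γ (Set.Ici 0) ∧ StrictMonoOn γ (Set.Ici 0) ∧ γ 0 = 0

/-- `γ` is of class `K∞` if it is class `K` and `γ(r) → ∞` as `r → ∞`. -/
def ClassKInfty (γ : ℝ → ℝ) : Prop :=
  ClassK γ ∧ Tendsto γ atTop atTop

/-- `β : [0,∞) × [0,∞) → [0,∞)` is of class `KL` if `β(·,s)` is class `K` for each fixed `s`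
and `β(r,·)` is decreasing with `β(r,s) → 0` as `s → ∞` for each fixed `r`. -/
def ClassKL (β : ℝ → ℝ → ℝ) : Prop :=
  (∀ s, 0 ≤ s → ClassK fun r => β r s) ∧
  ∀ r, 0 ≤ r → AntitoneOn (β r) (Set.Ici 0) ∧ Tendsto (β r) atTop (nhds 0)

open Function

/-- Extension of a class-K function to a globally strictly monotone continuous function. -/
noncomputable def kExt (κ : ℝ → ℝ) : ℝ → ℝ := fun x => κ (max x 0) + min x 0

lemma kExt_of_nonneg {κ : ℝ → ℝ} {x : ℝ} (hx : 0 ≤ x) : kExt κ x = κ x := by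
  simp [kExt, max_eq_left hx, min_eq_right hx]

lemma kExt_zero {κ : ℝ → ℝ} (h : κ 0 = 0) : kExt κ 0 = 0 := by
  simp [kExt, h]

lemma kExt_continuous {κ : ℝ → ℝ} (hκ : ClassK κ) : Continuous (kExt κ) := by
  refine Continuous.add ?_ (continuous_id.min continuous_const)
  exact hκ.1.comp_continuous (continuous_id.max continuous_const) fun x => mem_Ici.mpr (le_max_right _ _)

lemma kExt_strictMono {κ : ℝ → ℝ} (hκ : ClassK κ) : StrictMono (kExt κ) := by
  intro x y hxy
  have hmax : κ (max x 0) ≤ κ (max y 0) :=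
    hκ.2.1.monotoneOn (mem_Ici.mpr (le_max_right _ _)) (mem_Ici.mpr (le_max_right _ _)) (max_le_max hxy.le le_rfl)
  rcases lt_or_ge x 0 with hx | hx
  · have hmin : min x 0 < min y 0 := by
      rcases le_or_gt y 0 with hy | hy
      · simpa [min_eq_left hx.le, min_eq_left hy] using hxy
      · simpa [min_eq_left hx.le, min_eq_right hy.le] using hx
    exact add_lt_add_of_le_of_lt hmax hmin
  · have h1 : κ (max x 0) < κ (max y 0) := by
      have := hκ.2.1 (le_max_right x 0) (le_max_right y 0)
        (by simp [max_eq_left hx, max_eq_left (hx.trans hxy.le)]; exact hxy)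
      exact this
    have h2 : min x 0 ≤ min y 0 := min_le_min hxy.le le_rfl
    exact add_lt_add_of_lt_of_le h1 h2

lemma kExt_tendsto_atTop {κ : ℝ → ℝ} (hκ : ClassKInfty κ) :
    Tendsto (kExt κ) atTop atTop := by
  refine hκ.2.congr' ?_
  filter_upwards [eventually_ge_atTop (0:ℝ)] with x hx
  exact (kExt_of_nonneg hx).symm

lemma kExt_tendsto_atBot (κ : ℝ → ℝ) : Tendsto (kExt κ) atBot atBot := by
  have : Tendsto (fun x : ℝ => κ 0 + x) atBot atBot :=
    tendsto_atBot_add_const_left _ _ tendsto_id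
  refine this.congr' ?_
  filter_upwards [eventually_le_atBot (0:ℝ)] with x hx
  simp [kExt, max_eq_right hx, min_eq_left hx]

lemma kExt_surjective {κ : ℝ → ℝ} (hκ : ClassKInfty κ) : Surjective (kExt κ) :=
  (kExt_continuous hκ.1).surjective (kExt_tendsto_atTop hκ) (kExt_tendsto_atBot κ)

/-- Generic inverse of a strictly monotone surjective real function. -/
noncomputable def rInv (F : ℝ → ℝ) : ℝ → ℝ := Function.invFun F

section rInv
variable {F : ℝ → ℝ}

lemma rInv_rightInv (hs : Surjective F) (y : ℝ) : F (rInv F y) = y := invFun_eq (hs y)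

lemma rInv_leftInv (hm : StrictMono F) (x : ℝ) : rInv F (F x) = x := leftInverse_invFun hm.injective x

lemma rInv_strictMono (hm : StrictMono F) (hs : Surjective F) : StrictMono (rInv F) := by
  intro a b hab
  have : F (rInv F a) < F (rInv F b) := by
    rw [rInv_rightInv hs, rInv_rightInv hs]; exact hab
  exact hm.lt_iff_lt.mp this

lemma rInv_surjective (hm : StrictMono F) : Surjective (rInv F) := fun x => ⟨F x, rInv_leftInv hm x⟩

lemma rInv_continuous (hm : StrictMono F) (hs : Surjective F) : Continuous (rInv F) :=
  ((rInv_strictMono hm hs).monotone).continuous_of_surjective (rInv_surjective hm)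

lemma rInv_zero (hm : StrictMono F) (h0 : F 0 = 0) : rInv F 0 = 0 := by
  conv_lhs => rw [← h0]
  exact rInv_leftInv hm 0

lemma rInv_le_iff (hm : StrictMono F) (hs : Surjective F) {x y : ℝ} : rInv F y ≤ x ↔ y ≤ F x := by
  rw [← hm.le_iff_le, rInv_rightInv hs]

lemma le_rInv_iff (hm : StrictMono F) (hs : Surjective F) {x y : ℝ} : x ≤ rInv F y ↔ F x ≤ y := by
  rw [← hm.le_iff_le, rInv_rightInv hs]

lemma rInv_tendsto_atTop (hm : StrictMono F) (hs : Surjective F) : Tendsto (rInv F) atTop atTop :=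
  tendsto_atTop_atTop.mpr fun b => ⟨F b, fun a ha => (le_rInv_iff hm hs).mpr ha⟩

end rInv

lemma rInv_tendsto_atBot {F : ℝ → ℝ} (hm : StrictMono F) (hs : Surjective F) :
    Tendsto (rInv F) atBot atBot :=
  tendsto_atBot_atBot.mpr fun b => ⟨F b, fun a ha => (rInv_le_iff hm hs).mpr ha⟩

noncomputable def runSup (g : ℝ → ℝ) (v : ℝ) : ℝ := sSup (g '' Icc 0 v)

lemma runSup_bdd {g : ℝ → ℝ} (hg : Continuous g) (v : ℝ) : BddAbove (g '' Icc 0 v) :=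
  (isCompact_Icc.image hg).bddAbove

lemma le_runSup {g : ℝ → ℝ} (hg : Continuous g) {u v : ℝ} (hu : u ∈ Icc 0 v) :
    g u ≤ runSup g v := le_csSup (runSup_bdd hg v) (mem_image_of_mem g hu)

lemma runSup_le {g : ℝ → ℝ} {v c : ℝ} (hv : 0 ≤ v) (hc : ∀ u ∈ Icc 0 v, g u ≤ c) :
    runSup g v ≤ c := by
  refine csSup_le (((nonempty_Icc).mpr hv).image g) ?_
  rintro y ⟨u, hu, rfl⟩
  exact hc u hu

lemma runSup_monotoneOn {g : ℝ → ℝ} (hg : Continuous g) : MonotoneOn (runSup g) (Ici 0) := by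
  intro a ha b _ hab
  exact csSup_le_csSup (runSup_bdd hg b) (((nonempty_Icc).mpr ha).image g)
    (image_mono (f := g) (Icc_subset_Icc_right hab))

lemma runSup_continuousOn {g : ℝ → ℝ} (hg : Continuous g) :
    ContinuousOn (runSup g) (Ici 0) := by
  intro v hv
  have hv' : (0:ℝ) ≤ v := hv
  rw [Metric.continuousWithinAt_iff]
  intro ε hε
  obtain ⟨δ, hδpos, hδ⟩ := Metric.continuousAt_iff.mp (hg.continuousAt (x := v)) (ε/3) (by positivity)
  refine ⟨δ, hδpos, fun u hu hdist => ?_⟩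
  have hu' : (0:ℝ) ≤ u := hu
  have key : ∀ a b : ℝ, 0 ≤ a → a ≤ b → dist a v < δ → dist b v < δ →
      runSup g b ≤ runSup g a + 2*(ε/3) := by
    intro a b ha hab hda hdb
    refine runSup_le (ha.trans hab) ?_
    intro t ht
    rcases le_or_gt t a with hta | hta
    · have h := le_runSup hg (v := a) ⟨ht.1, hta⟩
      linarith
    · have hdt : dist t v < δ := by
        rw [Real.dist_eq] at hda hdb ⊢
        rcases abs_lt.mp hda with ⟨hda1, hda2⟩
        rcases abs_lt.mp hdb with ⟨hdb1, hdb2⟩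
        rw [abs_lt]
        constructor <;> nlinarith [ht.2]
      have h1 : dist (g t) (g v) < ε/3 := hδ hdt
      have h2 : dist (g a) (g v) < ε/3 := hδ hda
      have h3 : g a ≤ runSup g a := le_runSup hg ⟨ha, le_rfl⟩
      rw [Real.dist_eq, abs_lt] at h1 h2
      linarith [h1.1, h1.2, h2.1, h2.2]
  rcases le_total u v with huv | huv
  · have h1 := key u v hu' huv hdist (by simpa using hδpos)
    have h2 : runSup g u ≤ runSup g v := runSup_monotoneOn hg hu' hv' huv
    rw [Real.dist_eq, abs_lt]
    constructor <;> linarith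
  · have h1 := key v u hv' huv (by simpa using hδpos) hdist
    have h2 : runSup g v ≤ runSup g u := runSup_monotoneOn hg hv' hu' huv
    rw [Real.dist_eq, abs_lt]
    constructor <;> linarith

lemma iterate_tendsto_zero {φ : ℝ → ℝ} (hc : ContinuousOn φ (Ici 0))
    (h0 : ∀ v, 0 ≤ v → 0 ≤ φ v) (hle : ∀ v, 0 ≤ v → φ v ≤ v)
    (hfix : ∀ L, 0 ≤ L → φ L = L → L = 0) {v : ℝ} (hv : 0 ≤ v) :
    Tendsto (fun k => φ^[k] v) atTop (nhds 0) := by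
  set a : ℕ → ℝ := fun k => φ^[k] v with ha
  have hnonneg : ∀ k, 0 ≤ a k := by
    intro k; induction k with
    | zero => simpa [ha] using hv
    | succ n ih =>
      have : a (n+1) = φ (a n) := by rw [ha]; simp only; rw [Function.iterate_succ_apply']
      rw [this]; exact h0 _ ih
  have hsucc : ∀ n, a (n+1) = φ (a n) := by
    intro n; rw [ha]; simp only; rw [Function.iterate_succ_apply']
  have hanti : Antitone a := antitone_nat_of_succ_le fun n => by
    rw [hsucc n]; exact hle _ (hnonneg n)
  have hbdd : BddBelow (range a) := ⟨0, by rintro y ⟨k, rfl⟩; exact hnonneg k⟩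
  have hlim : Tendsto a atTop (nhds (⨅ k, a k)) := tendsto_atTop_ciInf hanti hbdd
  set L := ⨅ k, a k with hL
  have hL0 : 0 ≤ L := le_ciInf hnonneg
  have hφL : Tendsto (fun k => φ (a k)) atTop (nhds (φ L)) := by
    have h1 : Tendsto a atTop (nhdsWithin L (Ici 0)) :=
      tendsto_nhdsWithin_of_tendsto_nhds_of_eventually_within a hlim
        (Eventually.of_forall hnonneg)
    exact ((hc L hL0).tendsto).comp h1
  have hshift : Tendsto (fun k => a (k+1)) atTop (nhds L) :=
    hlim.comp (tendsto_add_atTop_nat 1)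
  have heq : (fun k => φ (a k)) = fun k => a (k+1) := by
    funext k; rw [hsucc k]
  rw [heq] at hφL
  have hLfix : φ L = L := tendsto_nhds_unique hφL hshift
  have : L = 0 := hfix L hL0 hLfix
  rw [this] at hlim
  exact hlim

/-- **Classical discrete-time ISS theorem (Jiang–Wang).** If the deterministic system
`x_{k+1} = f(x_k,d_k)` with continuous `f`, `f(0,0) = 0`, admits a continuous ISS Lyapunov
function `V` with `κ₁(‖x‖) ≤ V(x) ≤ κ₂(‖x‖)` (`κ₁, κ₂, κ₃ ∈ K∞`, `κ₄ ∈ K`) and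
`V(f(x,d)) - V(x) ≤ -κ₃(‖x‖) + κ₄(‖d‖)`, then the system is input-to-state stable: there
exist `β ∈ KL` and `γ ∈ K` such that every trajectory driven by a bounded disturbance
sequence satisfies `‖x_k‖ ≤ β(‖x₀‖, k) + γ(sup_j ‖d_j‖)` for all `k`. -/
theorem iss_lyapunov_implies_iss {n m : ℕ}
    (f : EuclideanSpace ℝ (Fin n) → EuclideanSpace ℝ (Fin m) → EuclideanSpace ℝ (Fin n))
    (hf : Continuous (Function.uncurry f))
    (hf0 : f 0 0 = 0)
    (V : EuclideanSpace ℝ (Fin n) → ℝ) (hVcont : Continuous V) (hVnonneg : ∀ x, 0 ≤ V x)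
    (κ₁ κ₂ κ₃ κ₄ : ℝ → ℝ)
    (hκ₁ : ClassKInfty κ₁) (hκ₂ : ClassKInfty κ₂) (hκ₃ : ClassKInfty κ₃) (hκ₄ : ClassK κ₄)
    (hsandwich : ∀ x, κ₁ ‖x‖ ≤ V x ∧ V x ≤ κ₂ ‖x‖)
    (hdrift : ∀ (x : EuclideanSpace ℝ (Fin n)) (dd : EuclideanSpace ℝ (Fin m)),
      V (f x dd) - V x ≤ -κ₃ ‖x‖ + κ₄ ‖dd‖) :
    ∃ (β : ℝ → ℝ → ℝ) (γ : ℝ → ℝ), ClassKL β ∧ ClassK γ ∧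
      ∀ (x₀ : EuclideanSpace ℝ (Fin n)) (dseq : ℕ → EuclideanSpace ℝ (Fin m)),
        BddAbove (Set.range fun j => ‖dseq j‖) →
        ∀ (x : ℕ → EuclideanSpace ℝ (Fin n)), x 0 = x₀ →
          (∀ k, x (k + 1) = f (x k) (dseq k)) →
          ∀ k : ℕ, ‖x k‖ ≤ β ‖x₀‖ k + γ (⨆ j, ‖dseq j‖) := by
  classical
  -- opaque extended comparison functions
  obtain ⟨K1, hK1def⟩ : ∃ F : ℝ → ℝ, F = kExt κ₁ := ⟨_, rfl⟩
  obtain ⟨K2, hK2def⟩ : ∃ F : ℝ → ℝ, F = kExt κ₂ := ⟨_, rfl⟩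
  obtain ⟨K3, hK3def⟩ : ∃ F : ℝ → ℝ, F = kExt κ₃ := ⟨_, rfl⟩
  obtain ⟨K4, hK4def⟩ : ∃ F : ℝ → ℝ, F = kExt κ₄ := ⟨_, rfl⟩
  have hK1m : StrictMono K1 := by rw [hK1def]; exact kExt_strictMono hκ₁.1
  have hK2m : StrictMono K2 := by rw [hK2def]; exact kExt_strictMono hκ₂.1
  have hK3m : StrictMono K3 := by rw [hK3def]; exact kExt_strictMono hκ₃.1
  have hK4m : StrictMono K4 := by rw [hK4def]; exact kExt_strictMono hκ₄
  have hK1s : Surjective K1 := by rw [hK1def]; exact kExt_surjective hκ₁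
  have hK2s : Surjective K2 := by rw [hK2def]; exact kExt_surjective hκ₂
  have hK1z : K1 0 = 0 := by rw [hK1def]; exact kExt_zero hκ₁.1.2.2
  have hK2z : K2 0 = 0 := by rw [hK2def]; exact kExt_zero hκ₂.1.2.2
  have hK3z : K3 0 = 0 := by rw [hK3def]; exact kExt_zero hκ₃.1.2.2
  have hK4z : K4 0 = 0 := by rw [hK4def]; exact kExt_zero hκ₄.2.2
  have hK2c : Continuous K2 := by rw [hK2def]; exact kExt_continuous hκ₂.1
  have hK3c : Continuous K3 := by rw [hK3def]; exact kExt_continuous hκ₃.1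
  have hK4c : Continuous K4 := by rw [hK4def]; exact kExt_continuous hκ₄
  have hK3T : Tendsto K3 atTop atTop := by rw [hK3def]; exact kExt_tendsto_atTop hκ₃
  have hK3B : Tendsto K3 atBot atBot := by rw [hK3def]; exact kExt_tendsto_atBot κ₃
  have hK1eq : ∀ r : ℝ, 0 ≤ r → K1 r = κ₁ r := fun r hr => by
    rw [hK1def]; exact kExt_of_nonneg hr
  have hK2eq : ∀ r : ℝ, 0 ≤ r → K2 r = κ₂ r := fun r hr => by
    rw [hK2def]; exact kExt_of_nonneg hr
  have hK3eq : ∀ r : ℝ, 0 ≤ r → K3 r = κ₃ r := fun r hr => by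
    rw [hK3def]; exact kExt_of_nonneg hr
  have hK4eq : ∀ r : ℝ, 0 ≤ r → K4 r = κ₄ r := fun r hr => by
    rw [hK4def]; exact kExt_of_nonneg hr
  -- inverses
  obtain ⟨ψ₁, hψ₁def⟩ : ∃ F : ℝ → ℝ, F = rInv K1 := ⟨_, rfl⟩
  obtain ⟨ψ₂, hψ₂def⟩ : ∃ F : ℝ → ℝ, F = rInv K2 := ⟨_, rfl⟩
  have hψ₁m : StrictMono ψ₁ := by rw [hψ₁def]; exact rInv_strictMono hK1m hK1s
  have hψ₂m : StrictMono ψ₂ := by rw [hψ₂def]; exact rInv_strictMono hK2m hK2s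
  have hψ₁c : Continuous ψ₁ := by rw [hψ₁def]; exact rInv_continuous hK1m hK1s
  have hψ₂c : Continuous ψ₂ := by rw [hψ₂def]; exact rInv_continuous hK2m hK2s
  have hψ₁z : ψ₁ 0 = 0 := by rw [hψ₁def]; exact rInv_zero hK1m hK1z
  have hψ₂z : ψ₂ 0 = 0 := by rw [hψ₂def]; exact rInv_zero hK2m hK2z
  have hψ₁nn : ∀ t, 0 ≤ t → 0 ≤ ψ₁ t := fun t ht => hψ₁z ▸ hψ₁m.monotone ht
  have hψ₁le : ∀ a b : ℝ, K1 a ≤ b → a ≤ ψ₁ b := fun a b h => by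
    rw [hψ₁def]; exact (le_rInv_iff hK1m hK1s).mpr h
  have hψ₂le : ∀ a b : ℝ, a ≤ K2 b → ψ₂ a ≤ b := fun a b h => by
    rw [hψ₂def]; exact (rInv_le_iff hK2m hK2s).mpr h
  have hψ₂T : Tendsto ψ₂ atTop atTop := by rw [hψ₂def]; exact rInv_tendsto_atTop hK2m hK2s
  have hψ₂B : Tendsto ψ₂ atBot atBot := by rw [hψ₂def]; exact rInv_tendsto_atBot hK2m hK2s
  -- α = K3 ∘ ψ₂
  obtain ⟨α, hαdef⟩ : ∃ F : ℝ → ℝ, F = fun v => K3 (ψ₂ v) := ⟨_, rfl⟩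
  have hαm : StrictMono α := by rw [hαdef]; exact hK3m.comp hψ₂m
  have hαc : Continuous α := by rw [hαdef]; exact hK3c.comp hψ₂c
  have hαz : α 0 = 0 := by simp only [hαdef]; rw [hψ₂z, hK3z]
  have hαT : Tendsto α atTop atTop := by rw [hαdef]; exact hK3T.comp hψ₂T
  have hαB : Tendsto α atBot atBot := by rw [hαdef]; exact hK3B.comp hψ₂B
  -- atil
  obtain ⟨atil, hatildef⟩ : ∃ F : ℝ → ℝ, F = fun v => min (α v) v / 2 := ⟨_, rfl⟩
  have hatilm : StrictMono atil := by
    intro a b hab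
    have h1 : min (α a) a < min (α b) b :=
      lt_min ((min_le_left _ _).trans_lt (hαm hab)) ((min_le_right _ _).trans_lt hab)
    simp only [hatildef]; linarith
  have hatilc : Continuous atil := by rw [hatildef]; exact (hαc.min continuous_id).div_const 2
  have hatilz : atil 0 = 0 := by simp only [hatildef]; simp [hαz]
  have hatilT : Tendsto atil atTop atTop := by
    rw [tendsto_atTop]
    intro b
    filter_upwards [hαT.eventually_ge_atTop (2*b), eventually_ge_atTop (2*b)] with v h1 h2
    have h3 : 2*b ≤ min (α v) v := le_min h1 h2
    simp only [hatildef]; linarith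
  have hatilB : Tendsto atil atBot atBot := by
    rw [tendsto_atBot]
    intro b
    filter_upwards [hαB.eventually_le_atBot (2*b), eventually_le_atBot (2*b)] with v h1 h2
    have h3 : min (α v) v ≤ 2*b := le_trans (min_le_left _ _) h1
    simp only [hatildef]; linarith
  have hatils : Surjective atil := hatilc.surjective hatilT hatilB
  have hatil_half : ∀ v, atil v ≤ v / 2 := by
    intro v
    have h1 := min_le_right (α v) v
    simp only [hatildef]; linarith
  have hatilnn : ∀ v, 0 ≤ v → 0 ≤ atil v := fun v hv => hatilz ▸ hatilm.monotone hv
  have hatil_le_α : ∀ v, 0 ≤ v → atil v ≤ α v := by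
    intro v hv
    have h1 : 0 ≤ α v := hαz ▸ hαm.monotone hv
    have h2 := min_le_left (α v) v
    simp only [hatildef]; linarith
  obtain ⟨ψ₆, hψ₆def⟩ : ∃ F : ℝ → ℝ, F = rInv atil := ⟨_, rfl⟩
  have hψ₆m : StrictMono ψ₆ := by rw [hψ₆def]; exact rInv_strictMono hatilm hatils
  have hψ₆c : Continuous ψ₆ := by rw [hψ₆def]; exact rInv_continuous hatilm hatils
  have hψ₆z : ψ₆ 0 = 0 := by rw [hψ₆def]; exact rInv_zero hatilm hatilz
  have hψ₆r : ∀ y : ℝ, atil (ψ₆ y) = y := fun y => by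
    rw [hψ₆def]; exact rInv_rightInv hatils y
  -- g and h
  obtain ⟨gg, hggdef⟩ : ∃ F : ℝ → ℝ, F = fun v => v - atil v := ⟨_, rfl⟩
  have hggc : Continuous gg := by rw [hggdef]; exact continuous_id.sub hatilc
  have hgg_le : ∀ v, 0 ≤ v → gg v ≤ v := by
    intro v hv; simp only [hggdef]; linarith [hatilnn v hv]
  have hgg_ge : ∀ v, 0 ≤ v → v/2 ≤ gg v := by
    intro v hv; simp only [hggdef]; linarith [hatil_half v]
  obtain ⟨hh, hhhdef⟩ : ∃ F : ℝ → ℝ, F = runSup gg := ⟨_, rfl⟩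
  have hhh_mono : MonotoneOn hh (Ici 0) := by rw [hhhdef]; exact runSup_monotoneOn hggc
  have hhh_cont : ContinuousOn hh (Ici 0) := by rw [hhhdef]; exact runSup_continuousOn hggc
  have hhh_le : ∀ v, 0 ≤ v → hh v ≤ v := by
    intro v hv
    rw [hhhdef]
    exact runSup_le hv fun u hu => (hgg_le u hu.1).trans hu.2
  have hhh_ge_g : ∀ v, 0 ≤ v → gg v ≤ hh v := fun v hv => by
    rw [hhhdef]; exact le_runSup hggc ⟨hv, le_rfl⟩
  have hhh_nonneg : ∀ v, 0 ≤ v → 0 ≤ hh v := by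
    intro v hv
    have h1 := hhh_ge_g v hv
    have h2 := hgg_ge v hv
    linarith
  have hhh_decr : ∀ v, 0 ≤ v → hh v ≤ v - atil (v/2) := by
    intro v hv
    rw [hhhdef]
    refine runSup_le hv fun u hu => ?_
    rcases le_or_gt u (v/2) with h | h
    · have h1 : atil (v/2) ≤ v/4 := by
        have h2 := hatil_half (v/2); linarith
      have h3 := hgg_le u hu.1
      linarith
    · have h1 : atil (v/2) ≤ atil u := hatilm.monotone h.le
      simp only [hggdef]
      linarith [hu.2]
  -- Hh
  obtain ⟨Hh, hHhdef⟩ : ∃ F : ℝ → ℝ, F = fun v => (v + hh v) / 2 := ⟨_, rfl⟩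
  have hHh_mono : MonotoneOn Hh (Ici 0) := by
    intro a ha b hb hab
    have h1 := hhh_mono ha hb hab
    simp only [hHhdef]; linarith
  have hHh_cont : ContinuousOn Hh (Ici 0) := by
    rw [hHhdef]; exact (continuousOn_id.add hhh_cont).div_const 2
  have hHh_zero : Hh 0 = 0 := by
    have h1 : hh 0 ≤ 0 := hhh_le 0 le_rfl
    have h2 : 0 ≤ hh 0 := hhh_nonneg 0 le_rfl
    simp only [hHhdef]; linarith
  have hHh_nonneg : ∀ v, 0 ≤ v → 0 ≤ Hh v := by
    intro v hv; simp only [hHhdef]; linarith [hhh_nonneg v hv]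
  have hHh_le : ∀ v, 0 ≤ v → Hh v ≤ v := by
    intro v hv; simp only [hHhdef]; linarith [hhh_le v hv]
  have hHh_ge : ∀ v, 0 ≤ v → v - atil v / 2 ≤ Hh v := by
    intro v hv
    have h1 := hhh_ge_g v hv
    simp only [hggdef] at h1
    simp only [hHhdef]
    linarith
  have hHh_fix : ∀ L, 0 ≤ L → Hh L = L → L = 0 := by
    intro L hL hfixL
    by_contra hne
    have hLpos : 0 < L := lt_of_le_of_ne hL (Ne.symm hne)
    have h1 : hh L = L := by simp only [hHhdef] at hfixL; linarith
    have h2 := hhh_decr L hL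
    have h3 : 0 < atil (L/2) := by
      have h4 := hatilm (show (0:ℝ) < L/2 by linarith)
      rw [hatilz] at h4; exact h4
    linarith
  -- iterates
  have hItSucc : ∀ (k : ℕ) (v : ℝ), Hh^[k+1] v = Hh (Hh^[k] v) := fun k v =>
    Function.iterate_succ_apply' Hh k v
  have hItNN : ∀ (k : ℕ) (v : ℝ), 0 ≤ v → 0 ≤ Hh^[k] v := by
    intro k
    induction k with
    | zero => intro v hv; simpa using hv
    | succ p ih => intro v hv; rw [hItSucc]; exact hHh_nonneg _ (ih v hv)
  have hItZero : ∀ k : ℕ, Hh^[k] 0 = 0 := fun k => Function.iterate_fixed hHh_zero k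
  have hItMono : ∀ k : ℕ, MonotoneOn (Hh^[k]) (Ici 0) := by
    intro k
    induction k with
    | zero => intro a _ b _ hab; simpa using hab
    | succ p ih =>
      intro a ha b hb hab
      rw [hItSucc, hItSucc]
      exact hHh_mono (hItNN p a ha) (hItNN p b hb) (ih ha hb hab)
  have hItCont : ∀ k : ℕ, ContinuousOn (fun v => Hh^[k] v) (Ici 0) := by
    intro k
    induction k with
    | zero => simpa using continuousOn_id' _
    | succ p ih =>
      have heq : (fun v => Hh^[p+1] v) = fun v => Hh (Hh^[p] v) := by
        funext v; rw [hItSucc]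
      rw [heq]
      exact hHh_cont.comp ih fun v hv => hItNN p v hv
  have hItAnti : ∀ v, 0 ≤ v → Antitone fun k => Hh^[k] v := by
    intro v hv
    refine antitone_nat_of_succ_le fun p => ?_
    rw [hItSucc]
    exact hHh_le _ (hItNN p v hv)
  have hItTend : ∀ v, 0 ≤ v → Tendsto (fun k => Hh^[k] v) atTop (nhds 0) := fun v hv =>
    iterate_tendsto_zero hHh_cont hHh_nonneg hHh_le hHh_fix hv
  -- β and γ
  obtain ⟨β, hβdef⟩ : ∃ F : ℝ → ℝ → ℝ,
      F = fun r s => ψ₁ (Hh^[⌊s⌋₊] (K2 r)) + r / (1 + s) := ⟨_, rfl⟩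
  obtain ⟨γ, hγdef⟩ : ∃ F : ℝ → ℝ, F = fun r => ψ₁ (ψ₆ (2 * K4 r) + K4 r) := ⟨_, rfl⟩
  have hK2nn : ∀ r, 0 ≤ r → 0 ≤ K2 r := fun r hr => hK2z ▸ hK2m.monotone hr
  refine ⟨β, γ, ⟨?_, ?_⟩, ⟨?_, ?_, ?_⟩, ?_⟩
  · -- ∀ s ≥ 0, ClassK (β · s)
    intro s hs
    have hs1 : (0:ℝ) < 1 + s := by linarith
    simp only [hβdef]
    refine ⟨?_, ?_, ?_⟩
    · refine ContinuousOn.add ?_ ((continuous_id.div_const (1+s)).continuousOn)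
      refine Continuous.comp_continuousOn hψ₁c ?_
      exact (hItCont ⌊s⌋₊).comp hK2c.continuousOn fun r hr => hK2nn r hr
    · intro a ha b hb hab
      have h1 : ψ₁ (Hh^[⌊s⌋₊] (K2 a)) ≤ ψ₁ (Hh^[⌊s⌋₊] (K2 b)) :=
        hψ₁m.monotone (hItMono ⌊s⌋₊ (hK2nn a ha) (hK2nn b hb) (hK2m.monotone hab.le))
      have h2 : a / (1+s) < b / (1+s) := by gcongr
      simp only
      exact add_lt_add_of_le_of_lt h1 h2
    · simp only
      rw [hK2z, hItZero, hψ₁z]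
      simp
  · -- ∀ r ≥ 0, AntitoneOn + Tendsto
    intro r hr
    constructor
    · intro s1 hs1 s2 hs2 h12
      have hs1' : (0:ℝ) ≤ s1 := hs1
      have hterm1 : ψ₁ (Hh^[⌊s2⌋₊] (K2 r)) ≤ ψ₁ (Hh^[⌊s1⌋₊] (K2 r)) :=
        hψ₁m.monotone (hItAnti (K2 r) (hK2nn r hr) (Nat.floor_mono h12))
      have hterm2 : r / (1 + s2) ≤ r / (1 + s1) :=
        div_le_div_of_nonneg_left hr (by linarith) (by linarith)
      simp only [hβdef]
      linarith
    · have t1 : Tendsto (fun s : ℝ => ψ₁ (Hh^[⌊s⌋₊] (K2 r))) atTop (nhds 0) := by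
        have h1 : Tendsto (fun k : ℕ => Hh^[k] (K2 r)) atTop (nhds 0) :=
          hItTend (K2 r) (hK2nn r hr)
        have h2 : Tendsto (fun s : ℝ => Hh^[⌊s⌋₊] (K2 r)) atTop (nhds 0) :=
          h1.comp tendsto_nat_floor_atTop
        have h3 := (hψ₁c.tendsto 0).comp h2
        rw [hψ₁z] at h3
        exact h3
      have t2 : Tendsto (fun s : ℝ => r / (1 + s)) atTop (nhds 0) := by
        have h1 : Tendsto (fun s : ℝ => 1 + s) atTop atTop :=
          tendsto_atTop_add_const_left _ 1 tendsto_id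
        have h2 := h1.inv_tendsto_atTop
        have h3 := h2.const_mul r
        simpa [div_eq_mul_inv] using h3
      have t3 := t1.add t2
      rw [hβdef]
      simpa using t3
  · -- γ continuous
    rw [hγdef]
    exact (hψ₁c.comp ((hψ₆c.comp (continuous_const.mul hK4c)).add hK4c)).continuousOn
  · -- γ strict mono
    refine StrictMono.strictMonoOn ?_ _
    rw [hγdef]
    refine hψ₁m.comp ?_
    intro a b hab
    have h1 : ψ₆ (2 * K4 a) < ψ₆ (2 * K4 b) := by
      apply hψ₆m
      have h2 := hK4m hab
      linarith
    have h2 := hK4m hab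
    simp only
    linarith
  · -- γ 0 = 0
    simp only [hγdef]
    rw [hK4z]
    norm_num
    rw [hψ₆z, hψ₁z]
  -- main trajectory bound
  · intro x₀ dseq hbdd x hx0 hxrec k
    have hDj : ∀ j, ‖dseq j‖ ≤ ⨆ j, ‖dseq j‖ := fun j => le_ciSup hbdd j
    obtain ⟨D, hDdef⟩ : ∃ D : ℝ, D = ⨆ j, ‖dseq j‖ := ⟨_, rfl⟩
    rw [← hDdef]
    rw [← hDdef] at hDj
    have hD0 : 0 ≤ D := (norm_nonneg _).trans (hDj 0)
    obtain ⟨w, hwdef⟩ : ∃ w : ℝ, w = κ₄ D := ⟨_, rfl⟩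
    have hw0 : 0 ≤ w := by
      have h1 : κ₄ 0 ≤ κ₄ D := hκ₄.2.1.monotoneOn self_mem_Ici hD0 hD0
      rw [hwdef, ← hκ₄.2.2]
      exact h1
    have hwge : ∀ j, κ₄ ‖dseq j‖ ≤ w := fun j => by
      rw [hwdef]
      exact hκ₄.2.1.monotoneOn (norm_nonneg _) hD0 (hDj j)
    -- the invariant level
    obtain ⟨c', hc'def⟩ : ∃ c' : ℝ, c' = ψ₆ (2*w) + w := ⟨_, rfl⟩
    have hψ₆w : 0 ≤ ψ₆ (2*w) := by
      have h1 : ψ₆ 0 ≤ ψ₆ (2*w) := hψ₆m.monotone (by linarith)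
      rw [hψ₆z] at h1
      exact h1
    have hc'0 : 0 ≤ c' := by rw [hc'def]; linarith
    have hγD : γ D = ψ₁ c' := by
      simp only [hγdef]
      rw [hK4eq D hD0, ← hwdef, hc'def]
    -- one-step estimate
    have hstep : ∀ p : ℕ, V (x (p+1)) ≤ V (x p) - atil (V (x p)) + w := by
      intro p
      have hd := hdrift (x p) (dseq p)
      rw [← hxrec p] at hd
      have h1 : ψ₂ (V (x p)) ≤ ‖x p‖ :=
        hψ₂le _ _ (by rw [hK2eq _ (norm_nonneg _)]; exact (hsandwich (x p)).2)
      have h2 : α (V (x p)) ≤ κ₃ ‖x p‖ := by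
        rw [← hK3eq _ (norm_nonneg _)]
        simp only [hαdef]
        exact hK3m.monotone h1
      have h3 : atil (V (x p)) ≤ α (V (x p)) := hatil_le_α _ (hVnonneg _)
      have h4 := hwge p
      linarith
    -- main invariant by induction
    have hmain : ∀ p : ℕ, V (x p) ≤ max (Hh^[p] (V x₀)) c' := by
      intro p
      induction p with
      | zero =>
        rw [hx0]
        simp
      | succ p ih =>
        have hvp0 : 0 ≤ V (x p) := hVnonneg _
        by_cases hcase : V (x p) ≤ c'
        · -- stays below c'
          refine le_max_of_le_right ?_
          rcases le_or_gt (V (x p)) (ψ₆ (2*w)) with hsmall | hbig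
          · have h1 := hstep p
            have h2 := hatilnn _ hvp0
            rw [hc'def]
            linarith
          · have h2w : 2*w ≤ atil (V (x p)) := by
              have h1 := hatilm.monotone hbig.le
              rw [hψ₆r (2*w)] at h1
              exact h1
            have h1 := hstep p
            linarith
        · -- above c': strict decrease
          push_neg at hcase
          have hvp_le : V (x p) ≤ Hh^[p] (V x₀) := by
            rcases max_cases (Hh^[p] (V x₀)) c' with ⟨heq, _⟩ | ⟨heq, _⟩
            · rw [heq] at ih; exact ih
            · rw [heq] at ih; linarith
          have h2w : 2*w ≤ atil (V (x p)) := by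
            have h0 : ψ₆ (2*w) ≤ V (x p) := by rw [hc'def] at hcase; linarith
            have h1 := hatilm.monotone h0
            rw [hψ₆r (2*w)] at h1
            exact h1
          have h1 := hstep p
          have h2 : V (x (p+1)) ≤ V (x p) - atil (V (x p)) / 2 := by linarith
          have h3 : V (x p) - atil (V (x p)) / 2 ≤ Hh (V (x p)) := hHh_ge _ hvp0
          have h4 : Hh (V (x p)) ≤ Hh (Hh^[p] (V x₀)) :=
            hHh_mono hvp0 (hItNN p _ (hVnonneg x₀)) hvp_le
          refine le_max_of_le_left ?_
          rw [hItSucc]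
          linarith
    -- conclude
    have hb1 : K1 ‖x k‖ ≤ V (x k) := by
      rw [hK1eq _ (norm_nonneg _)]
      exact (hsandwich (x k)).1
    have h2 : ‖x k‖ ≤ ψ₁ (V (x k)) := hψ₁le _ _ hb1
    have h3 : ψ₁ (V (x k)) ≤ max (ψ₁ (Hh^[k] (V x₀))) (ψ₁ c') := by
      have h4 := hψ₁m.monotone (hmain k)
      rwa [hψ₁m.monotone.map_max] at h4
    have h4 : ψ₁ (Hh^[k] (V x₀)) ≤ ψ₁ (Hh^[k] (K2 ‖x₀‖)) := by
      refine hψ₁m.monotone (hItMono k (hVnonneg x₀) (hK2nn _ (norm_nonneg _)) ?_)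
      rw [hK2eq _ (norm_nonneg _)]
      exact (hsandwich x₀).2
    have h5 : 0 ≤ ψ₁ (Hh^[k] (K2 ‖x₀‖)) :=
      hψ₁nn _ (hItNN k _ (hK2nn _ (norm_nonneg _)))
    have h6 : 0 ≤ ψ₁ c' := hψ₁nn _ hc'0
    have h7 : 0 ≤ ‖x₀‖ / (1 + (k:ℝ)) := by positivity
    have h8 : max (ψ₁ (Hh^[k] (V x₀))) (ψ₁ c') ≤ ψ₁ (Hh^[k] (K2 ‖x₀‖)) + ψ₁ c' :=
      max_le (by linarith) (by linarith)
    simp only [hβdef, hγD, Nat.floor_natCast]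
    linarith
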